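/- Let n ≥ 1 and let (r_1, ..., r_{n+1}) be an exchangeable random vector of real random variables, i.e., its joint law is invariant under every permutation of the n+1 coordinates. Let α ∈ (1/(n+1), 1) and let k = ⌈(1 − α)(n + 1)⌉. Then P(r_{n+1} ≤ r_{(k)}) ≥ 1 − α, where r_{(k)} denotes the k-th smallest value among r_1, ..., r_n. -/

import Mathlib

open MeasureTheory

/-- The `k`-th smallest value (1-indexed) among `v 0, ..., v (n-1)`. -/
noncomputable def kthSmallest {n : ℕ} (k : ℕ) (v : Fin n → ℝ) : ℝ :=
  (Multiset.sort (Multiset.map v Finset.univ.val) (· ≤ ·)).getD (k - 1) 0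

open scoped ENNReal


lemma sorted_getElem_lt_iff {L : List ℝ} (hL : List.Pairwise (· ≤ ·) L) {t : ℝ} {i : ℕ}
    (hi : i < L.length) :
    L[i] < t ↔ i < L.countP (fun x => decide (x < t)) := by
  constructor
  · intro h
    have h1 : (L.take (i+1)).countP (fun x => decide (x < t)) = (L.take (i+1)).length := by
      rw [List.countP_eq_length]
      intro x hx
      obtain ⟨j, hj, rfl⟩ := List.mem_iff_getElem.mp hx
      rw [List.getElem_take]
      have hjle : j ≤ i := by
        have := hj; rw [List.length_take] at this; omega
      have hjlt : j < L.length := lt_of_le_of_lt hjle hi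
      have : L[j] ≤ L[i] := hL.rel_get_of_le (a := ⟨j, hjlt⟩) (b := ⟨i, hi⟩) hjle
      simpa using lt_of_le_of_lt this h
    have h2 : (L.take (i+1)).length = i + 1 := by
      rw [List.length_take]; omega
    have h3 := List.Sublist.countP_le (p := fun x => decide (x < t)) (List.take_sublist (i+1) L)
    omega
  · intro h
    by_contra hcon
    push_neg at hcon
    have hsplit : L.countP (fun x => decide (x < t)) =
        (L.take i).countP (fun x => decide (x < t)) + (L.drop i).countP (fun x => decide (x < t)) := by
      conv_lhs => rw [← List.take_append_drop i L]
      rw [List.countP_append]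
    have hdrop : (L.drop i).countP (fun x => decide (x < t)) = 0 := by
      rw [List.countP_eq_zero]
      intro x hx
      obtain ⟨j, hj, rfl⟩ := List.mem_iff_getElem.mp hx
      rw [List.getElem_drop]
      have hij : i + j < L.length := by
        have := hj; rw [List.length_drop] at this; omega
      have : L[i] ≤ L[i+j] := hL.rel_get_of_le (a := ⟨i, hi⟩) (b := ⟨i+j, hij⟩) (by simp)
      simpa using not_lt.mpr (le_trans hcon this)
    have htake : (L.take i).countP (fun x => decide (x < t)) ≤ i := by
      have := List.countP_le_length (p := fun x => decide (x < t)) (l := L.take i)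
      rw [List.length_take] at this; omega
    omega

lemma countP_sort_eq_card {n : ℕ} (v : Fin n → ℝ) (p : ℝ → Prop) [DecidablePred p] :
    (Multiset.sort (Multiset.map v Finset.univ.val) (· ≤ ·)).countP (fun x => decide (p x)) =
      (Finset.univ.filter fun i => p (v i)).card := by
  have h1 : ((Multiset.sort (Multiset.map v Finset.univ.val) (· ≤ ·) : List ℝ) : Multiset ℝ) =
      Multiset.map v Finset.univ.val := Multiset.sort_eq _ _
  have h2 := Multiset.coe_countP p (Multiset.sort (Multiset.map v Finset.univ.val) (· ≤ ·))
  rw [h1] at h2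
  rw [← h2, Multiset.countP_map]
  rfl

lemma length_sort {n : ℕ} (v : Fin n → ℝ) :
    (Multiset.sort (Multiset.map v Finset.univ.val) (· ≤ ·)).length = n := by
  have := Multiset.length_sort (α := ℝ) (r := (· ≤ ·))
    (s := Multiset.map v Finset.univ.val)
  simpa using this

lemma le_kthSmallest_iff {n k : ℕ} (hk1 : 1 ≤ k) (hkn : k ≤ n) (v : Fin n → ℝ) (t : ℝ) :
    t ≤ kthSmallest k v ↔ (Finset.univ.filter fun i => v i < t).card < k := by
  set L := Multiset.sort (Multiset.map v Finset.univ.val) (· ≤ ·) with hLdef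
  have hlen : L.length = n := length_sort v
  have hkl : k - 1 < L.length := by omega
  have hget : kthSmallest k v = L[k-1] := List.getD_eq_getElem L 0 hkl
  have hiff := sorted_getElem_lt_iff (Multiset.pairwise_sort _ _) (t := t) hkl
  have hcount : L.countP (fun x => decide (x < t)) = (Finset.univ.filter fun i => v i < t).card :=
    countP_sort_eq_card v (fun x => x < t)
  rw [hget]
  constructor
  · intro h
    have : ¬ (L[k-1] < t) := not_lt.mpr h
    rw [hiff, hcount] at this
    omega
  · intro h
    by_contra hcon
    push_neg at hcon
    rw [hiff, hcount] at hcon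
    omega

lemma key_count {N k : ℕ} (hk1 : 1 ≤ k) (hkN : k ≤ N) (x : Fin N → ℝ) :
    k ≤ (Finset.univ.filter fun j => (Finset.univ.filter fun i => x i < x j).card < k).card := by
  set L := Multiset.sort (Multiset.map x Finset.univ.val) (· ≤ ·) with hLdef
  have hlen : L.length = N := length_sort x
  have hkl : k - 1 < L.length := by omega
  set s := L[k-1] with hsdef
  have hsorted : List.Pairwise (· ≤ ·) L := Multiset.pairwise_sort _ _
  -- each j with value ≤ s has rank < k, and vice versa
  have hiffj : ∀ j : Fin N,
      ((Finset.univ.filter fun i => x i < x j).card < k ↔ x j ≤ s) := by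
    intro j
    have hiff := sorted_getElem_lt_iff hsorted (t := x j) hkl
    have hcount : L.countP (fun y => decide (y < x j)) =
        (Finset.univ.filter fun i => x i < x j).card := countP_sort_eq_card x (fun y => y < x j)
    rw [hcount] at hiff
    constructor
    · intro h
      by_contra hcon
      push_neg at hcon
      have := hiff.mp hcon
      omega
    · intro h
      have : ¬ (s < x j) := not_lt.mpr h
      rw [hiff] at this
      omega
  have hfilter_eq : (Finset.univ.filter fun j => (Finset.univ.filter fun i => x i < x j).card < k)
      = (Finset.univ.filter fun j : Fin N => x j ≤ s) := by
    apply Finset.filter_congr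
    intro j _
    simp [hiffj j]
  rw [hfilter_eq]
  -- at least k elements of L are ≤ s
  have hc : (Finset.univ.filter fun j : Fin N => x j ≤ s).card =
      L.countP (fun y => decide (y ≤ s)) := (countP_sort_eq_card x (fun y => y ≤ s)).symm
  rw [hc]
  have h1 : (L.take k).countP (fun y => decide (y ≤ s)) = (L.take k).length := by
    rw [List.countP_eq_length]
    intro y hy
    obtain ⟨j, hj, rfl⟩ := List.mem_iff_getElem.mp hy
    rw [List.getElem_take]
    have hjle : j ≤ k - 1 := by
      have := hj; rw [List.length_take] at this; omega
    have hjlt : j < L.length := by omega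
    have : L[j] ≤ L[k-1] := hsorted.rel_get_of_le (a := ⟨j, hjlt⟩) (b := ⟨k-1, hkl⟩) hjle
    simpa using this
  have h2 : (L.take k).length = k := by rw [List.length_take]; omega
  have h3 := List.Sublist.countP_le (p := fun y => decide (y ≤ s)) (List.take_sublist k L)
  omega

/-- Let `(r 0, ..., r n)` be an exchangeable random vector of `n+1` real
random variables, `α ∈ (1/(n+1), 1)` and `k = ⌈(1 − α)(n + 1)⌉`. Then
`P(r (last) ≤ r_(k)) ≥ 1 − α`, where `r_(k)` is the `k`-th smallest among the first `n`
coordinates. -/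
theorem stmt12 {Ω : Type*} [MeasurableSpace Ω] (P : Measure Ω) [IsProbabilityMeasure P]
    (n : ℕ) (hn : 1 ≤ n) (r : Fin (n+1) → Ω → ℝ)
    (hmeas : ∀ i, Measurable (r i))
    (hexch : ∀ σ : Equiv.Perm (Fin (n+1)),
      P.map (fun ω => fun i => r (σ i) ω) = P.map (fun ω => fun i => r i ω))
    (α : ℝ) (hα : α ∈ Set.Ioo (1/((n:ℝ)+1)) 1) :
    1 - α ≤
      (P {ω | r (Fin.last n) ω ≤
        kthSmallest ⌈(1 - α) * ((n:ℝ)+1)⌉₊ (fun i : Fin n => r i.castSucc ω)}).toReal := by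
  
  classical
  obtain ⟨hα1, hα2⟩ := hα
  have hnpos : (0:ℝ) < (n:ℝ)+1 := by positivity
  set k := ⌈(1 - α) * ((n:ℝ)+1)⌉₊ with hkdef
  have hαn : 1 < α * ((n:ℝ)+1) := by
    have := (div_lt_iff₀ hnpos).mp hα1
    linarith
  have hk1 : 1 ≤ k := by
    rw [hkdef]
    have : (0:ℝ) < (1 - α) * ((n:ℝ)+1) := by nlinarith
    exact Nat.one_le_iff_ne_zero.mpr (by positivity)
  have hkn : k ≤ n := by
    rw [hkdef]
    apply Nat.ceil_le.mpr
    nlinarith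
  -- rank functions and events
  set p : Fin (n+1) → Ω → ℕ :=
    fun j ω => (Finset.univ.filter fun i => r i ω < r j ω).card with hpdef
  set A : Fin (n+1) → Set Ω := fun j => {ω | p j ω < k} with hAdef
  -- the target set is A (last)
  have hset : {ω | r (Fin.last n) ω ≤
      kthSmallest k (fun i : Fin n => r i.castSucc ω)} = A (Fin.last n) := by
    ext ω
    simp only [hAdef, hpdef, Set.mem_setOf_eq]
    rw [le_kthSmallest_iff hk1 hkn]
    have hcard : (Finset.univ.filter fun i : Fin (n+1) => r i ω < r (Fin.last n) ω).card
        = (Finset.univ.filter fun i : Fin n => r i.castSucc ω < r (Fin.last n) ω).card := by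
      rw [Finset.card_filter, Finset.card_filter, Fin.sum_univ_castSucc]
      simp
    rw [hcard]
  -- measurability
  have hpm : ∀ j, Measurable (p j) := by
    intro j
    have : p j = fun ω => ∑ i : Fin (n+1), if r i ω < r j ω then 1 else 0 := by
      funext ω; rw [hpdef]; exact Finset.card_filter _ _
    rw [this]
    apply Finset.measurable_sum
    intro i _
    exact Measurable.ite (measurableSet_lt (hmeas i) (hmeas j)) measurable_const measurable_const
  have hAm : ∀ j, MeasurableSet (A j) := by
    intro j
    have : A j = p j ⁻¹' (Set.Iio k) := rfl
    rw [this]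
    exact (hpm j) measurableSet_Iio
  -- sets in the product space
  set B : Fin (n+1) → Set (Fin (n+1) → ℝ) :=
    fun j => {x | (Finset.univ.filter fun i => x i < x j).card < k} with hBdef
  have hBm : ∀ j, MeasurableSet (B j) := by
    intro j
    have hq : Measurable (fun x : Fin (n+1) → ℝ =>
        (Finset.univ.filter fun i => x i < x j).card) := by
      have : (fun x : Fin (n+1) → ℝ => (Finset.univ.filter fun i => x i < x j).card)
          = fun x => ∑ i : Fin (n+1), if x i < x j then 1 else 0 := by
        funext x; exact Finset.card_filter _ _
      rw [this]
      apply Finset.measurable_sum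
      intro i _
      exact Measurable.ite (measurableSet_lt (measurable_pi_apply i) (measurable_pi_apply j))
        measurable_const measurable_const
    have : B j = (fun x : Fin (n+1) → ℝ =>
        (Finset.univ.filter fun i => x i < x j).card) ⁻¹' (Set.Iio k) := rfl
    rw [this]
    exact hq measurableSet_Iio
  set vec : Ω → (Fin (n+1) → ℝ) := fun ω i => r i ω with hvecdef
  have hvec : Measurable vec := measurable_pi_lambda _ hmeas
  have hAB : ∀ j, A j = vec ⁻¹' B j := fun j => rfl
  -- exchangeability gives equal probabilities
  have hProb : ∀ j, P (A j) = P (A (Fin.last n)) := by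
    intro j
    set σ := Equiv.swap j (Fin.last n) with hσdef
    have hBeq : B j = (fun x : Fin (n+1) → ℝ => x ∘ σ) ⁻¹' B (Fin.last n) := by
      ext x
      simp only [hBdef, Set.mem_setOf_eq, Set.mem_preimage, Function.comp]
      have hσlast : σ (Fin.last n) = j := Equiv.swap_apply_right _ _
      simp only [hσlast]
      have : (Finset.univ.filter fun i : Fin (n+1) => x (σ i) < x j).card
          = (Finset.univ.filter fun i : Fin (n+1) => x i < x j).card := by
        rw [Finset.card_filter, Finset.card_filter]
        exact Equiv.sum_comp σ (fun i => if x i < x j then 1 else 0)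
      rw [this]
    have hσmeas : Measurable (fun ω => fun i => r (σ i) ω) :=
      measurable_pi_lambda _ fun i => hmeas (σ i)
    have h1 := congrArg (fun μ => μ (B (Fin.last n))) (hexch σ)
    rw [Measure.map_apply hσmeas (hBm _), Measure.map_apply hvec (hBm _)] at h1
    have h2 : (fun ω => fun i => r (σ i) ω) ⁻¹' (B (Fin.last n)) = vec ⁻¹' B j := by
      rw [hBeq]
      rfl
    rw [h2] at h1
    rw [hAB j, hAB (Fin.last n), h1]
  -- sum of probabilities is at least k
  have hlb : (k : ℝ≥0∞) ≤ ∑ j : Fin (n+1), P (A j) := by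
    have hPA : ∀ j : Fin (n+1), P (A j) =
        ∫⁻ ω, Set.indicator (A j) (fun _ => (1:ℝ≥0∞)) ω ∂P := by
      intro j
      exact (lintegral_indicator_one (hAm j)).symm
    rw [Finset.sum_congr rfl fun j _ => hPA j, ← lintegral_finset_sum]
    · have hpoint : ∀ ω, (k:ℝ≥0∞) ≤
          ∑ j : Fin (n+1), (A j).indicator (fun _ => (1:ℝ≥0∞)) ω := by
        intro ω
        have hkc := key_count hk1 (by omega : k ≤ n+1) (fun i => r i ω)
        have heq : ∑ j : Fin (n+1), (A j).indicator (fun _ => (1:ℝ≥0∞)) ω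
            = ((Finset.univ.filter fun j : Fin (n+1) =>
                (Finset.univ.filter fun i => r i ω < r j ω).card < k).card : ℝ≥0∞) := by
          rw [Finset.card_filter]
          push_cast
          apply Finset.sum_congr rfl
          intro j _
          by_cases h : (Finset.univ.filter fun i => r i ω < r j ω).card < k
          · simp [Set.indicator, hAdef, hpdef, h]
          · simp [Set.indicator, hAdef, hpdef, h]
        rw [heq]
        exact_mod_cast hkc
      have hconst : (k:ℝ≥0∞) = ∫⁻ (_ : Ω), (k:ℝ≥0∞) ∂P := by simp
      rw [hconst]
      exact lintegral_mono hpoint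
    · intro j _
      exact measurable_const.indicator (hAm j)
  have hsum : ∑ j : Fin (n+1), P (A j) = ((n:ℝ≥0∞)+1) * P (A (Fin.last n)) := by
    rw [Finset.sum_congr rfl fun j _ => hProb j, Finset.sum_const, Finset.card_univ,
      Fintype.card_fin, nsmul_eq_mul]
    push_cast
    ring
  rw [hsum] at hlb
  -- pass to reals
  have hne : ((n:ℝ≥0∞)+1) * P (A (Fin.last n)) ≠ ⊤ :=
    ENNReal.mul_ne_top (by simp) (measure_ne_top P _)
  have hreal : (k:ℝ) ≤ ((n:ℝ)+1) * (P (A (Fin.last n))).toReal := by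
    have := ENNReal.toReal_mono hne hlb
    rw [ENNReal.toReal_mul] at this
    simpa [ENNReal.toReal_add] using this
  have hceil : (1 - α) * ((n:ℝ)+1) ≤ (k:ℝ) := Nat.le_ceil _
  rw [hset]
  nlinarith [hreal, hceil]
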